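/- arXiv:2302.07063 — 2 statements merged into one kernel-verified Lean document; each statement's English description precedes it below -/
import Mathlib

section
/- Let n,d,k be positive integers with d ≤ n, d ≥ 2, and k ≥ 2. Then h_EAR(n,d,k) ≤ d + n/k^{d−1}; i.e., there exists a decision rule system S with n(S)=n, d(S)=d, k(S)=k such that the extended All Rules problem EAR(S) is solvable by an e-decision tree of depth at most d + n/k^{d−1}. -/
open scoped Classical
noncomputable section

/-- Attributes are natural numbers. -/
abbrev Attr := ℕ
/-- A value in an equation system: `some δ` is a number, `none` is the special symbol `*`. -/
abbrev Val := Option ℕ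
/-- A decision rule: left-hand side (set of equations attribute = numeric value) and
right-hand side (decision). -/
abbrev Rule := Finset (Attr × ℕ) × ℕ
/-- An equation system over attributes with possibly `*` values. -/
abbrev EqSys := Finset (Attr × Val)
/-- A decision rule system. -/
abbrev DRS := Finset Rule

/-- The equation system `K(r)` of a rule. -/
def Kr (r : Rule) : EqSys := r.1.image fun p => (p.1, some p.2)
/-- The set `A(r)` of attributes of a rule. -/
def Ar (r : Rule) : Finset Attr := r.1.image Prod.fst
/-- The length of a rule. -/
def ruleLen (r : Rule) : ℕ := r.1.card
/-- Well-formed rule: attributes in the left-hand side are pairwise different. -/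
def WFRule (r : Rule) : Prop := ∀ p ∈ r.1, ∀ q ∈ r.1, p.1 = q.1 → p.2 = q.2
/-- Well-formed decision rule system: a finite nonempty set of well-formed rules. -/
def WFS (S : DRS) : Prop := S.Nonempty ∧ ∀ r ∈ S, WFRule r

/-- `A(S)`: attributes of a system. -/
def AS (S : DRS) : Finset Attr := S.biUnion Ar
/-- `n(S) = |A(S)|`. -/
def nS (S : DRS) : ℕ := (AS S).card
/-- `d(S)`: the maximum length of a rule in `S`. -/
def dS (S : DRS) : ℕ := S.sup ruleLen
/-- `V_S(a)`: values of attribute `a` occurring in `S`. -/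
def VS (S : DRS) (a : Attr) : Finset ℕ :=
  S.biUnion fun r => (r.1.filter fun p => p.1 = a).image Prod.snd
/-- `k(S)`: maximum number of values of a single attribute. -/
def kS (S : DRS) : ℕ := (AS S).sup fun a => (VS S a).card

/-- Branching sets of o-decision trees: `V_S(a)`. -/
def Bo (S : DRS) (a : Attr) : Finset Val := (VS S a).image some
/-- Branching sets of e-decision trees: `EV_S(a) = V_S(a) ∪ {*}`. -/
def Be (S : DRS) (a : Attr) : Finset Val := insert none (Bo S a)

/-- Consistency of an equation system. -/
def Consistent (K : EqSys) : Prop := ∀ p ∈ K, ∀ q ∈ K, p.1 = q.1 → p.2 = q.2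

/-- Decision trees: terminal nodes labeled with sets of rules, working nodes labeled
with an attribute and having a child for each possible value (only children whose
labels lie in the relevant branching set are meaningful). -/
inductive DTree where
  | leaf : DRS → DTree
  | node : Attr → (Val → DTree) → DTree

/-- Depth of a decision tree with respect to branching sets `B`. -/
def depthT (B : Attr → Finset Val) : DTree → ℕ
  | .leaf _ => 0
  | .node a c => ((B a).sup fun v => depthT B (c v)) + 1

/-- A decision tree over a system `S` (with branching sets `B`). -/
def TreeOver (B : Attr → Finset Val) (S : DRS) : DTree → Prop
  | .leaf Z => Z ⊆ S
  | .node a c => a ∈ AS S ∧ ∀ v ∈ B a, TreeOver B S (c v)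

/-- `PathT B Γ K Z`: there is a complete path in `Γ` (following edges with labels
in the branching sets `B`) with equation system `K` and terminal label `Z`. -/
inductive PathT (B : Attr → Finset Val) : DTree → EqSys → DRS → Prop
  | leaf (Z : DRS) : PathT B (.leaf Z) ∅ Z
  | node (a : Attr) (c : Val → DTree) (v : Val) (K : EqSys) (Z : DRS) :
      v ∈ B a → PathT B (c v) K Z → PathT B (.node a c) (insert (a, v) K) Z

/-- `Γ` solves the problem given by correctness condition `cond` on (K(ξ), τ(ξ)). -/
def Solves (cond : EqSys → DRS → Prop) (B : Attr → Finset Val) (Γ : DTree) : Prop :=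
  ∀ K Z, PathT B Γ K Z → Consistent K → cond K Z

/-- Correctness condition for the All Rules problem. -/
def CondAR (S : DRS) (K : EqSys) (Z : DRS) : Prop :=
  (∀ r ∈ Z, Kr r ⊆ K) ∧ ∀ r ∈ S, r ∉ Z → ¬ Consistent (Kr r ∪ K)
/-- Correctness condition for the All Decisions problem. -/
def CondAD (S : DRS) (K : EqSys) (Z : DRS) : Prop :=
  (∀ r ∈ Z, Kr r ⊆ K) ∧ ∀ r ∈ S, r.2 ∉ Z.image Prod.snd → ¬ Consistent (Kr r ∪ K)
/-- Correctness condition for the Some Rules problem. -/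
def CondSR (S : DRS) (K : EqSys) (Z : DRS) : Prop :=
  (∀ r ∈ Z, Kr r ⊆ K) ∧ (Z = ∅ → ∀ r ∈ S, ¬ Consistent (Kr r ∪ K))

/-- Minimum depth of a decision tree over `S` solving the given problem. -/
def hgen (cond : DRS → EqSys → DRS → Prop) (B : DRS → Attr → Finset Val) (S : DRS) : ℕ :=
  sInf {m | ∃ Γ, TreeOver (B S) S Γ ∧ Solves (cond S) (B S) Γ ∧ depthT (B S) Γ = m}

def hAR (S : DRS) : ℕ := hgen CondAR Bo S
def hEAR (S : DRS) : ℕ := hgen CondAR Be S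
def hAD (S : DRS) : ℕ := hgen CondAD Bo S
def hEAD (S : DRS) : ℕ := hgen CondAD Be S
def hSR (S : DRS) : ℕ := hgen CondSR Bo S
def hESR (S : DRS) : ℕ := hgen CondSR Be S

/-- SR-reduced system. -/
def SRred (S : DRS) : Prop := ∀ r ∈ S, ¬ ∃ r' ∈ S, r'.1 ⊂ r.1
/-- AD-reduced system. -/
def ADred (S : DRS) : Prop := ∀ r ∈ S, ¬ ∃ r' ∈ S, r'.1 ⊂ r.1 ∧ r'.2 = r.2
/-- `R_SR(S)`. -/
def RSR (S : DRS) : DRS := S.filter fun r => ¬ ∃ r' ∈ S, r'.1 ⊂ r.1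
/-- `R_AD(S)`. -/
def RAD (S : DRS) : DRS := S.filter fun r => ¬ ∃ r' ∈ S, r'.1 ⊂ r.1 ∧ r'.2 = r.2

/-- `h_C(n,d,k)`: minimum of `h S` over systems with the given parameters. -/
def hmin (h : DRS → ℕ) (n d k : ℕ) : ℕ :=
  sInf {m | ∃ S, WFS S ∧ nS S = n ∧ dS S = d ∧ kS S = k ∧ h S = m}
/-- `H_C(n,d,k)`: maximum of `h S` over systems with the given parameters. -/
def Hmax (h : DRS → ℕ) (n d k : ℕ) : ℕ :=
  sSup {m | ∃ S, WFS S ∧ nS S = n ∧ dS S = d ∧ kS S = k ∧ h S = m}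
/-- `h_C^R(n,d,k)`: minimum of `h S` over reduced systems (`P`) with given parameters. -/
def hminR (h : DRS → ℕ) (P : DRS → Prop) (n d k : ℕ) : ℕ :=
  sInf {m | ∃ S, WFS S ∧ P S ∧ nS S = n ∧ dS S = d ∧ kS S = k ∧ h S = m}
/-- `H_C^R(n,d,k)`: maximum of `h S` over reduced systems (`P`) with given parameters. -/
def HmaxR (h : DRS → ℕ) (P : DRS → Prop) (n d k : ℕ) : ℕ :=
  sSup {m | ∃ S, WFS S ∧ P S ∧ nS S = n ∧ dS S = d ∧ kS S = k ∧ h S = m}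

/-- Node cover of the hypergraph `G(S)`. -/
def NodeCover (S : DRS) (B : Finset Attr) : Prop :=
  B ⊆ AS S ∧ ∀ r ∈ S, Ar r ≠ ∅ → (Ar r ∩ B).Nonempty
/-- `β(S)`: minimum cardinality of a node cover of `G(S)`. -/
def nodeCoverNum (S : DRS) : ℕ := sInf {m | ∃ B, NodeCover S B ∧ B.card = m}

/-- `I_SR(S)`. -/
def ISR (S : DRS) : DRS := if ∀ r ∈ S, r.1 ≠ ∅ then S else S.filter fun r => r.1 = ∅
/-- `D_0(S)`: right-hand sides of length-0 rules. -/
def D0 (S : DRS) : Finset ℕ := (S.filter fun r => r.1 = ∅).image Prod.snd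
/-- `I_AD(S)`. -/
def IAD (S : DRS) : DRS := S.filter fun r => r.1 = ∅ ∨ r.2 ∉ D0 S

/-- `K(S, δ̄)` for an assignment `f` of numeric values to all attributes of `S`. -/
def KStuple (S : DRS) (f : Attr → ℕ) : EqSys := (AS S).image fun a => (a, some (f a))
/-- An incomplete decision rule system. -/
def IncompleteS (S : DRS) : Prop :=
  ∃ f : Attr → ℕ, (∀ a ∈ AS S, f a ∈ VS S a) ∧ ∀ r ∈ S, ¬ Consistent (Kr r ∪ KStuple S f)

/-- `r_α`: remove from the left-hand side of `r` all equations belonging to `α`. -/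
def resRule (α : EqSys) (r : Rule) : Rule :=
  (r.1.filter fun p => (p.1, (some p.2 : Val)) ∉ α, r.2)
/-- `S_α`: rules `r_α` for the rules `r ∈ S` with `K(r) ∪ α` consistent. -/
def Sres (α : EqSys) (S : DRS) : DRS :=
  (S.filter fun r => Consistent (Kr r ∪ α)).image (resRule α)

/-- Value chosen at a node labeled by an attribute `a ∉ A(S_α)` when building `Γ_α`:
the `α`-value of `a` if `a` occurs in `α`, and the minimum number of `V_S(a)` otherwise. -/
def chooseVal (α : EqSys) (S : DRS) (a : Attr) : Val :=
  if h : ∃ v, (a, v) ∈ α then Classical.choose h else some (sInf {n : ℕ | n ∈ VS S a})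

/-- The decision tree `Γ_α`. -/
def resTree (α : EqSys) (S : DRS) : DTree → DTree
  | .leaf Z => .leaf (Sres α Z)
  | .node a c =>
      if a ∈ AS (Sres α S) then .node a fun v => resTree α S (c v)
      else resTree α S (c (chooseVal α S a))

/-- The o-decision tree `o(Γ)`: remove all nodes reachable only via an edge labeled `*`. -/
def oTree : DTree → DTree
  | .leaf Z => .leaf Z
  | .node a c => .node a fun v => match v with
      | none => .leaf ∅
      | some x => oTree (c (some x))
namespace Stmt15Aux

lemma consistent_mono {A B : EqSys} (h : Consistent B) (hAB : A ⊆ B) : Consistent A :=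
  fun p hp q hq => h p (hAB hp) q (hAB hq)

lemma not_consistent_pair {A : EqSys} {a : Attr} {x y : Val}
    (hx : (a, x) ∈ A) (hy : (a, y) ∈ A) (hxy : x ≠ y) : ¬ Consistent A :=
  fun h => hxy (h (a, x) hx (a, y) hy rfl)

lemma attr_eq_nat {x y : ℕ} (h : @Eq Attr x y) : x = y := h

def dig (k i j : ℕ) : ℕ := j / k ^ i % k

def Rj (d k j : ℕ) : Rule :=
  (((Finset.range (d-1)).image fun i => (i, dig k i j)) ∪ {(d-1+j, 0)}, j)

def Sv (n v : ℕ) : Rule := ({(0, v)}, n + v)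

def Sys (n d k : ℕ) : DRS :=
  ((Finset.range (n-d+1)).image (Rj d k)) ∪ ((Finset.range k).image (Sv n))

lemma mem_Sys {n d k : ℕ} {r : Rule} :
    r ∈ Sys n d k ↔ (∃ j < n-d+1, r = Rj d k j) ∨ ∃ v < k, r = Sv n v := by
  simp only [Sys, Finset.mem_union, Finset.mem_image, Finset.mem_range]
  constructor
  · rintro (⟨j, hj, rfl⟩ | ⟨v, hv, rfl⟩)
    · exact Or.inl ⟨j, hj, rfl⟩
    · exact Or.inr ⟨v, hv, rfl⟩
  · rintro (⟨j, hj, rfl⟩ | ⟨v, hv, rfl⟩)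
    · exact Or.inl ⟨j, hj, rfl⟩
    · exact Or.inr ⟨v, hv, rfl⟩

lemma mem_Rj_fst {d k j : ℕ} {p : Attr × ℕ} :
    p ∈ (Rj d k j).1 ↔ (∃ i < d-1, p = (i, dig k i j)) ∨ p = (d-1+j, 0) := by
  simp only [Rj, Finset.mem_union, Finset.mem_image, Finset.mem_range, Finset.mem_singleton]
  constructor
  · rintro (⟨i, hi, rfl⟩ | rfl)
    · exact Or.inl ⟨i, hi, rfl⟩
    · exact Or.inr rfl
  · rintro (⟨i, hi, rfl⟩ | rfl)
    · exact Or.inl ⟨i, hi, rfl⟩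
    · exact Or.inr rfl

lemma tuple_mem_Kr_Rj {d k j i : ℕ} (hi : i < d-1) :
    (i, (some (dig k i j) : Val)) ∈ Kr (Rj d k j) := by
  unfold Kr; rw [Finset.mem_image]
  exact ⟨(i, dig k i j), mem_Rj_fst.2 (Or.inl ⟨i, hi, rfl⟩), rfl⟩

lemma extra_mem_Kr_Rj {d k j : ℕ} :
    (d-1+j, (some 0 : Val)) ∈ Kr (Rj d k j) := by
  unfold Kr; rw [Finset.mem_image]
  exact ⟨(d-1+j, 0), mem_Rj_fst.2 (Or.inr rfl), rfl⟩

lemma Kr_Rj_subset {d k j : ℕ} {K : EqSys}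
    (h1 : ∀ i < d-1, (i, (some (dig k i j) : Val)) ∈ K)
    (h2 : (d-1+j, (some 0 : Val)) ∈ K) : Kr (Rj d k j) ⊆ K := by
  intro q hq
  simp only [Kr, Finset.mem_image] at hq
  obtain ⟨p, hp, rfl⟩ := hq
  rcases mem_Rj_fst.1 hp with ⟨i, hi, rfl⟩ | rfl
  · exact h1 i hi
  · exact h2

lemma Kr_Sv {n v : ℕ} : Kr (Sv n v) = {(0, (some v : Val))} := by
  simp [Kr, Sv]

lemma Ar_Rj {d k j : ℕ} : Ar (Rj d k j) = Finset.range (d-1) ∪ {d-1+j} := by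
  ext a
  simp only [Ar, Finset.mem_image, Finset.mem_union, Finset.mem_range, Finset.mem_singleton]
  constructor
  · rintro ⟨p, hp, rfl⟩
    rcases mem_Rj_fst.1 hp with ⟨i, hi, rfl⟩ | rfl
    · exact Or.inl hi
    · exact Or.inr rfl
  · rintro (ha | rfl)
    · exact ⟨(a, dig k a j), mem_Rj_fst.2 (Or.inl ⟨a, ha, rfl⟩), rfl⟩
    · exact ⟨(d-1+j, 0), mem_Rj_fst.2 (Or.inr rfl), rfl⟩

lemma Ar_Sv {n v : ℕ} : Ar (Sv n v) = {0} := by simp [Ar, Sv]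

lemma mem_AS_Sys {n d k : ℕ} (hd : 2 ≤ d) (hdn : d ≤ n) (a : ℕ) :
    a ∈ AS (Sys n d k) ↔ a < n := by
  simp only [AS, Finset.mem_biUnion]
  constructor
  · rintro ⟨r, hr, ha⟩
    rcases mem_Sys.1 hr with ⟨j, hj, rfl⟩ | ⟨v, hv, rfl⟩
    · rw [Ar_Rj] at ha
      simp only [Finset.mem_union, Finset.mem_range, Finset.mem_singleton] at ha
      rcases ha with h | h
      · omega
      · have h' := attr_eq_nat h
        omega
    · rw [Ar_Sv, Finset.mem_singleton] at ha
      have h' := attr_eq_nat ha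
      omega
  · intro ha
    by_cases h : a < d - 1
    · refine ⟨Rj d k 0, mem_Sys.2 (Or.inl ⟨0, by omega, rfl⟩), ?_⟩
      rw [Ar_Rj]
      simp only [Finset.mem_union, Finset.mem_range, Finset.mem_singleton]
      exact Or.inl h
    · refine ⟨Rj d k (a - (d-1)), mem_Sys.2 (Or.inl ⟨a - (d-1), by omega, rfl⟩), ?_⟩
      rw [Ar_Rj]
      simp only [Finset.mem_union, Finset.mem_range, Finset.mem_singleton]
      exact Or.inr (by omega)

lemma AS_Sys {n d k : ℕ} (hd : 2 ≤ d) (hdn : d ≤ n) :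
    AS (Sys n d k) = Finset.range n := by
  ext a
  rw [mem_AS_Sys hd hdn a, Finset.mem_range]

lemma nS_Sys {n d k : ℕ} (hd : 2 ≤ d) (hdn : d ≤ n) : nS (Sys n d k) = n := by
  rw [nS, AS_Sys hd hdn, Finset.card_range]

lemma ruleLen_Rj {d k j : ℕ} (hd : 2 ≤ d) : ruleLen (Rj d k j) = d := by
  have hinj : Function.Injective (fun i : ℕ => ((i, dig k i j) : Attr × ℕ)) :=
    fun a b h => congrArg Prod.fst h
  have hdisj : Disjoint ((Finset.range (d-1)).image fun i => ((i, dig k i j) : Attr × ℕ))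
      ({((d-1+j : Attr), 0)} : Finset (Attr × ℕ)) := by
    rw [Finset.disjoint_singleton_right]
    intro h
    simp only [Finset.mem_image, Finset.mem_range] at h
    obtain ⟨i, hi, heq⟩ := h
    have h2 := attr_eq_nat (congrArg Prod.fst heq)
    omega
  rw [ruleLen, Rj]
  rw [Finset.card_union_of_disjoint hdisj, Finset.card_image_of_injective _ hinj,
    Finset.card_range, Finset.card_singleton]
  omega

lemma ruleLen_Sv {n v : ℕ} : ruleLen (Sv n v) = 1 := by simp [ruleLen, Sv]

lemma dS_Sys {n d k : ℕ} (hd : 2 ≤ d) : dS (Sys n d k) = d := by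
  apply le_antisymm
  · apply Finset.sup_le
    intro r hr
    rcases mem_Sys.1 hr with ⟨j, hj, rfl⟩ | ⟨v, hv, rfl⟩
    · rw [ruleLen_Rj hd]
    · rw [ruleLen_Sv]; omega
  · have h0 : Rj d k 0 ∈ Sys n d k := mem_Sys.2 (Or.inl ⟨0, by omega, rfl⟩)
    calc d = ruleLen (Rj d k 0) := (ruleLen_Rj hd).symm
    _ ≤ _ := Finset.le_sup (f := ruleLen) h0

lemma mem_VS_Sys {n d k a v : ℕ} :
    v ∈ VS (Sys n d k) a ↔ ∃ r ∈ Sys n d k, ((a : Attr), v) ∈ r.1 := by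
  simp only [VS, Finset.mem_biUnion, Finset.mem_image, Finset.mem_filter]
  constructor
  · rintro ⟨r, hr, p, ⟨hp, hpa⟩, rfl⟩
    refine ⟨r, hr, ?_⟩
    have : p = ((a : Attr), p.2) := by rw [← hpa]
    rwa [this] at hp
  · rintro ⟨r, hr, hav⟩
    exact ⟨r, hr, (a, v), ⟨hav, rfl⟩, rfl⟩

lemma VS_Sys_subset {n d k : ℕ} (hk : 1 ≤ k) (a : ℕ) :
    VS (Sys n d k) a ⊆ Finset.range k := by
  intro v hv
  rw [mem_VS_Sys] at hv
  obtain ⟨r, hr, hav⟩ := hv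
  rw [Finset.mem_range]
  rcases mem_Sys.1 hr with ⟨j, hj, rfl⟩ | ⟨w, hw, rfl⟩
  · rcases mem_Rj_fst.1 hav with ⟨i, hi, heq⟩ | heq
    · have h2 : v = dig k i j := congrArg Prod.snd heq
      rw [h2]
      exact Nat.mod_lt _ (by omega)
    · have h2 : v = 0 := congrArg Prod.snd heq
      omega
  · simp only [Sv, Finset.mem_singleton] at hav
    have h2 : v = w := congrArg Prod.snd hav
    omega

lemma VS_Sys_zero {n d k : ℕ} (hd : 2 ≤ d) (hk : 1 ≤ k) :
    VS (Sys n d k) 0 = Finset.range k := by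
  apply le_antisymm (VS_Sys_subset hk 0)
  intro v hv
  rw [Finset.mem_range] at hv
  rw [mem_VS_Sys]
  exact ⟨Sv n v, mem_Sys.2 (Or.inr ⟨v, hv, rfl⟩), by simp [Sv]⟩

lemma kS_Sys {n d k : ℕ} (hd : 2 ≤ d) (hdn : d ≤ n) (hk : 1 ≤ k) :
    kS (Sys n d k) = k := by
  apply le_antisymm
  · apply Finset.sup_le
    intro a _
    calc (VS (Sys n d k) a).card ≤ (Finset.range k).card :=
          Finset.card_le_card (VS_Sys_subset hk a)
    _ = k := Finset.card_range k
  · have h0 : (0 : Attr) ∈ AS (Sys n d k) := (mem_AS_Sys hd hdn 0).2 (by omega)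
    calc k = (VS (Sys n d k) 0).card := by rw [VS_Sys_zero hd hk, Finset.card_range]
    _ ≤ _ := Finset.le_sup (f := fun a => (VS (Sys n d k) a).card) h0

lemma WFS_Sys {n d k : ℕ} (hd : 2 ≤ d) : WFS (Sys n d k) := by
  constructor
  · exact ⟨Rj d k 0, mem_Sys.2 (Or.inl ⟨0, by omega, rfl⟩)⟩
  · intro r hr
    rcases mem_Sys.1 hr with ⟨j, hj, rfl⟩ | ⟨v, hv, rfl⟩
    · intro p hp q hq hpq
      rcases mem_Rj_fst.1 hp with ⟨i, hi, rfl⟩ | rfl <;>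
        rcases mem_Rj_fst.1 hq with ⟨i', hi', rfl⟩ | rfl
      · have h2 := attr_eq_nat hpq
        subst h2; rfl
      · have h2 := attr_eq_nat hpq
        omega
      · have h2 := attr_eq_nat hpq
        omega
      · rfl
    · intro p hp q hq hpq
      simp only [Sv, Finset.mem_singleton] at hp hq
      rw [hp, hq]
def chain (d k : ℕ) : DRS → List ℕ → DTree
  | acc, [] => .leaf acc
  | acc, j :: L => .node (d-1+j) fun v =>
      if v = some 0 then chain d k (insert (Rj d k j) acc) L else chain d k acc L

def Ljs (n d k : ℕ) (f : ℕ → ℕ) : List ℕ :=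
  ((Finset.range (n-d+1)).filter fun j => ∀ i < d-1, dig k i j = f i).toList

def tier (n d k : ℕ) : ℕ → (ℕ → ℕ) → DTree
  | 0, f => chain d k {Sv n (f 0)} (Ljs n d k f)
  | t+1, f => .node (d-2-t) fun v => match v with
      | none => .leaf (if d-2-t = 0 then ∅ else {Sv n (f 0)})
      | some x => tier n d k t (Function.update f (d-2-t) x)

lemma mem_Ljs {n d k : ℕ} {f : ℕ → ℕ} {j : ℕ} :
    j ∈ Ljs n d k f ↔ j < n-d+1 ∧ ∀ i < d-1, dig k i j = f i := by
  rw [Ljs, Finset.mem_toList, Finset.mem_filter, Finset.mem_range]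

lemma some_mem_Be {S : DRS} {a : Attr} {x : ℕ} (h : (some x : Val) ∈ Be S a) :
    x ∈ VS S a := by
  simp only [Be, Bo, Finset.mem_insert, Finset.mem_image] at h
  rcases h with h | ⟨y, hy, hyx⟩
  · exact absurd h (by simp)
  · rwa [Option.some_inj.1 hyx] at hy

lemma chain_over {n d k : ℕ} (hd : 2 ≤ d) (hdn : d ≤ n) (acc : DRS) (L : List ℕ)
    (hacc : acc ⊆ Sys n d k) (hL : ∀ j ∈ L, j < n-d+1) :
    TreeOver (Be (Sys n d k)) (Sys n d k) (chain d k acc L) := by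
  induction L generalizing acc with
  | nil => exact hacc
  | cons j L ih =>
    refine ⟨?_, fun v _ => ?_⟩
    · rw [mem_AS_Sys hd hdn]
      have := hL j (List.mem_cons_self)
      omega
    · dsimp only
      split
      · exact ih (insert (Rj d k j) acc)
          (Finset.insert_subset
            (mem_Sys.2 (Or.inl ⟨j, hL j (List.mem_cons_self), rfl⟩)) hacc)
          (fun j' hj' => hL j' (List.mem_cons_of_mem j hj'))
      · exact ih acc hacc (fun j' hj' => hL j' (List.mem_cons_of_mem j hj'))

lemma tier_over {n d k : ℕ} (hd : 2 ≤ d) (hdn : d ≤ n) (hk : 1 ≤ k) :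
    ∀ (t : ℕ) (f : ℕ → ℕ), t ≤ d-1 → (t < d-1 → f 0 < k) →
    TreeOver (Be (Sys n d k)) (Sys n d k) (tier n d k t f) := by
  intro t
  induction t with
  | zero =>
    intro f _ hf0
    apply chain_over hd hdn
    · simp only [Finset.singleton_subset_iff]
      exact mem_Sys.2 (Or.inr ⟨f 0, hf0 (by omega), rfl⟩)
    · intro j hj
      exact (mem_Ljs.1 hj).1
  | succ t ih =>
    intro f ht hf0
    refine ⟨?_, fun v _ => ?_⟩
    · rw [mem_AS_Sys hd hdn]
      omega
    · match v with
      | none =>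
        show TreeOver _ _ (DTree.leaf _)
        split
        · exact Finset.empty_subset _
        · show ({Sv n (f 0)} : DRS) ⊆ Sys n d k
          simp only [Finset.singleton_subset_iff]
          exact mem_Sys.2 (Or.inr ⟨f 0, hf0 (by omega), rfl⟩)
      | some x =>
        have hx : x ∈ VS (Sys n d k) (d-2-t) := some_mem_Be ‹_›
        have hxk : x < k := Finset.mem_range.1 (VS_Sys_subset hk _ hx)
        apply ih
        · omega
        · intro h0
          by_cases h : d-2-t = 0
          · rw [h, Function.update_self]
            exact hxk
          · rw [Function.update_of_ne (by omega)]
            exact hf0 (by omega)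

lemma depth_chain {n d k : ℕ} (acc : DRS) (L : List ℕ) :
    depthT (Be (Sys n d k)) (chain d k acc L) ≤ L.length := by
  induction L generalizing acc with
  | nil => exact Nat.le_of_eq rfl
  | cons j L ih =>
    show (Finset.sup _ fun v => depthT _ (if v = some 0 then _ else _)) + 1 ≤ L.length + 1
    refine Nat.add_le_add_right (Finset.sup_le fun v _ => ?_) 1
    split
    · exact ih _
    · exact ih _

lemma mod_eq_sum_dig {k : ℕ} (t j : ℕ) :
    j % k ^ t = ∑ i ∈ Finset.range t, dig k i j * k ^ i := by
  induction t with
  | zero => simp [Nat.mod_one]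
  | succ t ih =>
    rw [pow_succ, Nat.mod_mul, Finset.sum_range_succ, ← ih, dig]
    ring

lemma length_Ljs {n d k : ℕ} (f : ℕ → ℕ) :
    (Ljs n d k f).length ≤ (n-d) / k ^ (d-1) + 1 := by
  rw [Ljs, Finset.length_toList]
  have : ((Finset.range (n-d+1)).filter fun j => ∀ i < d-1, dig k i j = f i).card ≤
      (Finset.range ((n-d) / k ^ (d-1) + 1)).card := by
    apply Finset.card_le_card_of_injOn (fun j => j / k ^ (d-1))
    · intro j hj
      rw [Finset.mem_coe, Finset.mem_filter, Finset.mem_range] at hj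
      simp only [Finset.mem_coe, Finset.mem_range]
      have := Nat.div_le_div_right (c := k ^ (d-1)) (Nat.lt_succ_iff.1 hj.1)
      omega
    · intro j1 h1 j2 h2 hdiv
      have hdiv' : j1 / k ^ (d-1) = j2 / k ^ (d-1) := hdiv
      rw [Finset.mem_coe, Finset.mem_filter] at h1 h2
      have hm : j1 % k ^ (d-1) = j2 % k ^ (d-1) := by
        rw [mod_eq_sum_dig, mod_eq_sum_dig]
        apply Finset.sum_congr rfl
        intro i hi
        rw [h1.2 i (Finset.mem_range.1 hi), h2.2 i (Finset.mem_range.1 hi)]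
      rw [← Nat.div_add_mod j1 (k ^ (d-1)), ← Nat.div_add_mod j2 (k ^ (d-1)), hdiv', hm]
  rwa [Finset.card_range] at this

lemma depth_tier {n d k : ℕ} :
    ∀ (t : ℕ) (f : ℕ → ℕ),
    depthT (Be (Sys n d k)) (tier n d k t f) ≤ t + ((n-d) / k ^ (d-1) + 1) := by
  intro t
  induction t with
  | zero =>
    intro f
    exact le_trans (depth_chain _ _) (by simpa using length_Ljs f)
  | succ t ih =>
    intro f
    show (Finset.sup _ fun v => depthT _ _) + 1 ≤ (t + 1) + _
    have : ∀ v ∈ Be (Sys n d k) (d-2-t),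
        depthT (Be (Sys n d k)) (match v with
          | none => DTree.leaf (if d-2-t = 0 then ∅ else {Sv n (f 0)})
          | some x => tier n d k t (Function.update f (d-2-t) x)) ≤
        t + ((n-d) / k ^ (d-1) + 1) := by
      intro v _
      match v with
      | none => exact Nat.zero_le _
      | some x => exact ih _
    have h2 := Finset.sup_le this
    omega
lemma chain_good {n d k : ℕ} (hd : 2 ≤ d) :
    ∀ (L : List ℕ) (acc : DRS) (K0 : EqSys),
    (∀ r ∈ acc, Kr r ⊆ K0) →
    (∀ r ∈ Sys n d k, r ∉ acc → (∃ j ∈ L, r = Rj d k j) ∨ ¬ Consistent (Kr r ∪ K0)) →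
    (∀ j ∈ L, ∀ i < d-1, ((i : Attr), (some (dig k i j) : Val)) ∈ K0) →
    ∀ K Z, PathT (Be (Sys n d k)) (chain d k acc L) K Z →
      CondAR (Sys n d k) (K ∪ K0) Z := by
  intro L
  induction L with
  | nil =>
    intro acc K0 hacc hcov _ K Z hpath
    have hpath' : PathT (Be (Sys n d k)) (.leaf acc) K Z := hpath
    cases hpath'
    rw [Finset.empty_union]
    refine ⟨hacc, fun r hr hrz => ?_⟩
    rcases hcov r hr hrz with ⟨j, hj, _⟩ | h
    · exact absurd hj (List.not_mem_nil)
    · exact h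
  | cons j L ih =>
    intro acc K0 hacc hcov htup K Z hpath
    have hpath' : PathT (Be (Sys n d k)) (.node (d-1+j) fun v =>
        if v = some 0 then chain d k (insert (Rj d k j) acc) L else chain d k acc L) K Z :=
      hpath
    cases hpath' with
    | node a c v K' Z' hv hp =>
      rw [Finset.insert_union, ← Finset.union_insert]
      by_cases hv0 : v = some 0
      · subst hv0
        have hp' : PathT (Be (Sys n d k)) (chain d k (insert (Rj d k j) acc) L) K' Z := by
          simpa using hp
        refine ih (insert (Rj d k j) acc) (insert (d-1+j, some 0) K0) ?_ ?_ ?_ K' Z hp'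
        · intro r hr
          rcases Finset.mem_insert.1 hr with rfl | hr'
          · exact Kr_Rj_subset
              (fun i hi => Finset.mem_insert_of_mem (htup j (List.mem_cons_self) i hi))
              (Finset.mem_insert_self _ _)
          · exact (hacc r hr').trans (Finset.subset_insert _ _)
        · intro r hr hrn
          have hrn' : r ∉ acc := fun h => hrn (Finset.mem_insert_of_mem h)
          rcases hcov r hr hrn' with ⟨j', hj', req⟩ | h
          · rcases List.mem_cons.1 hj' with rfl | hj''
            · exact absurd (req ▸ Finset.mem_insert_self _ _) hrn
            · exact Or.inl ⟨j', hj'', req⟩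
          · exact Or.inr fun hc =>
              h (consistent_mono hc (Finset.union_subset_union_right (Finset.subset_insert _ _)))
        · exact fun j' hj' i hi =>
            Finset.mem_insert_of_mem (htup j' (List.mem_cons_of_mem j hj') i hi)
      · have hp' : PathT (Be (Sys n d k)) (chain d k acc L) K' Z := by
          simpa [hv0] using hp
        refine ih acc (insert (d-1+j, v) K0) ?_ ?_ ?_ K' Z hp'
        · exact fun r hr => (hacc r hr).trans (Finset.subset_insert _ _)
        · intro r hr hrn
          rcases hcov r hr hrn with ⟨j', hj', req⟩ | h
          · rcases List.mem_cons.1 hj' with rfl | hj''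
            · subst req
              refine Or.inr (not_consistent_pair (a := d-1+j')
                (x := (some 0 : Val)) (y := v) ?_ ?_ ?_)
              · exact Finset.mem_union_left _ extra_mem_Kr_Rj
              · exact Finset.mem_union_right _ (Finset.mem_insert_self _ _)
              · exact fun h => hv0 h.symm
            · exact Or.inl ⟨j', hj'', req⟩
          · exact Or.inr fun hc =>
              h (consistent_mono hc (Finset.union_subset_union_right (Finset.subset_insert _ _)))
        · exact fun j' hj' i hi =>
            Finset.mem_insert_of_mem (htup j' (List.mem_cons_of_mem j hj') i hi)

lemma tier_good {n d k : ℕ} (hd : 2 ≤ d) (hdn : d ≤ n) :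
    ∀ (t : ℕ) (f : ℕ → ℕ) (K0 : EqSys), t ≤ d-1 →
    (∀ i < d-1-t, ((i : Attr), (some (f i) : Val)) ∈ K0) →
    ∀ K Z, PathT (Be (Sys n d k)) (tier n d k t f) K Z →
      CondAR (Sys n d k) (K ∪ K0) Z := by
  intro t
  induction t with
  | zero =>
    intro f K0 _ hK0 K Z hpath
    refine chain_good hd (Ljs n d k f) {Sv n (f 0)} K0 ?_ ?_ ?_ K Z hpath
    · intro r hr
      rw [Finset.mem_singleton] at hr; subst hr
      rw [Kr_Sv, Finset.singleton_subset_iff]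
      exact hK0 0 (by omega)
    · intro r hr hrn
      rcases mem_Sys.1 hr with ⟨j, hj, rfl⟩ | ⟨v, hv, rfl⟩
      · by_cases hP : ∀ i < d-1, dig k i j = f i
        · exact Or.inl ⟨j, mem_Ljs.2 ⟨hj, hP⟩, rfl⟩
        · push_neg at hP
          obtain ⟨i, hi, hne⟩ := hP
          refine Or.inr (not_consistent_pair (a := i)
            (x := (some (dig k i j) : Val)) (y := (some (f i) : Val)) ?_ ?_ ?_)
          · exact Finset.mem_union_left _ (tuple_mem_Kr_Rj hi)
          · exact Finset.mem_union_right _ (hK0 i (by omega))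
          · simpa using hne
      · have hvf : v ≠ f 0 := by
          intro h; apply hrn; rw [Finset.mem_singleton, h]
        refine Or.inr (not_consistent_pair (a := 0)
          (x := (some v : Val)) (y := (some (f 0) : Val)) ?_ ?_ ?_)
        · refine Finset.mem_union_left _ ?_
          rw [Kr_Sv]; exact Finset.mem_singleton_self _
        · exact Finset.mem_union_right _ (hK0 0 (by omega))
        · simpa using hvf
    · intro j hj i hi
      rw [(mem_Ljs.1 hj).2 i hi]
      exact hK0 i (by omega)
  | succ t ih =>
    intro f K0 ht hK0 K Z hpath
    have hpath' : PathT (Be (Sys n d k)) (.node (d-2-t) fun v => (match v with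
        | none => DTree.leaf (if d-2-t = 0 then ∅ else {Sv n (f 0)})
        | some x => tier n d k t (Function.update f (d-2-t) x))) K Z := hpath
    cases hpath' with
    | node a c v K' Z' hv hp =>
      rw [Finset.insert_union, ← Finset.union_insert]
      rcases v with _ | x
      · have hp2 : PathT (Be (Sys n d k))
            (.leaf (if d-2-t = 0 then ∅ else {Sv n (f 0)})) K' Z := hp
        cases hp2
        rw [Finset.empty_union]
        by_cases h0 : d-2-t = 0
        · rw [h0]
          simp only [if_pos rfl]
          refine ⟨fun r hr => absurd hr (Finset.notMem_empty r), fun r hr _ => ?_⟩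
          rcases mem_Sys.1 hr with ⟨j, hj, rfl⟩ | ⟨w, hw, rfl⟩
          · refine not_consistent_pair (a := 0)
              (x := (some (dig k 0 j) : Val)) (y := (none : Val)) ?_ ?_ (by simp)
            · exact Finset.mem_union_left _ (tuple_mem_Kr_Rj (by omega))
            · exact Finset.mem_union_right _ (Finset.mem_insert_self _ _)
          · refine not_consistent_pair (a := 0)
              (x := (some w : Val)) (y := (none : Val)) ?_ ?_ (by simp)
            · refine Finset.mem_union_left _ ?_
              rw [Kr_Sv]; exact Finset.mem_singleton_self _
            · exact Finset.mem_union_right _ (Finset.mem_insert_self _ _)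
        · rw [if_neg h0]
          constructor
          · intro r hr
            rw [Finset.mem_singleton] at hr; subst hr
            rw [Kr_Sv, Finset.singleton_subset_iff]
            exact Finset.mem_insert_of_mem (hK0 0 (by omega))
          · intro r hr hrn
            rcases mem_Sys.1 hr with ⟨j, hj, rfl⟩ | ⟨w, hw, rfl⟩
            · refine not_consistent_pair (a := d-2-t)
                (x := (some (dig k (d-2-t) j) : Val)) (y := (none : Val)) ?_ ?_ (by simp)
              · exact Finset.mem_union_left _ (tuple_mem_Kr_Rj (by omega))
              · exact Finset.mem_union_right _ (Finset.mem_insert_self _ _)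
            · have hwf : w ≠ f 0 := by
                intro h; apply hrn; rw [Finset.mem_singleton, h]
              refine not_consistent_pair (a := 0)
                (x := (some w : Val)) (y := (some (f 0) : Val)) ?_ ?_ (by simpa using hwf)
              · refine Finset.mem_union_left _ ?_
                rw [Kr_Sv]; exact Finset.mem_singleton_self _
              · exact Finset.mem_union_right _
                  (Finset.mem_insert_of_mem (hK0 0 (by omega)))
      · have hp2 : PathT (Be (Sys n d k))
            (tier n d k t (Function.update f (d-2-t) x)) K' Z := hp
        refine ih (Function.update f (d-2-t) x) (insert (d-2-t, some x) K0) (by omega)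
          ?_ K' Z hp2
        intro i hi
        by_cases hie : i = d-2-t
        · subst hie
          rw [Function.update_self]
          exact Finset.mem_insert_self _ _
        · rw [Function.update_of_ne hie]
          exact Finset.mem_insert_of_mem (hK0 i (by omega))
lemma solves_Sys {n d k : ℕ} (hd : 2 ≤ d) (hdn : d ≤ n) :
    Solves (CondAR (Sys n d k)) (Be (Sys n d k)) (tier n d k (d-1) fun _ => 0) := by
  intro K Z hpath _
  have h := tier_good hd hdn (d-1) (fun _ => 0) ∅ le_rfl
    (fun i hi => absurd hi (by omega)) K Z hpath
  rwa [Finset.union_empty] at h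

lemma hEAR_Sys_le {n d k : ℕ} (hd : 2 ≤ d) (hdn : d ≤ n) (hk : 1 ≤ k) :
    hEAR (Sys n d k) ≤ d + (n-d) / k ^ (d-1) := by
  have hover : TreeOver (Be (Sys n d k)) (Sys n d k) (tier n d k (d-1) fun _ => 0) :=
    tier_over hd hdn hk (d-1) (fun _ => 0) le_rfl (fun h => absurd h (lt_irrefl _))
  have hmem : depthT (Be (Sys n d k)) (tier n d k (d-1) fun _ => 0) ∈
      {m | ∃ Γ, TreeOver (Be (Sys n d k)) (Sys n d k) Γ ∧
        Solves (CondAR (Sys n d k)) (Be (Sys n d k)) Γ ∧ depthT (Be (Sys n d k)) Γ = m} :=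
    ⟨tier n d k (d-1) fun _ => 0, hover, solves_Sys hd hdn, rfl⟩
  have h1 : hEAR (Sys n d k) ≤ depthT (Be (Sys n d k)) (tier n d k (d-1) fun _ => 0) :=
    Nat.sInf_le hmem
  have h2 := depth_tier (n := n) (d := d) (k := k) (d-1) (fun _ => 0)
  omega
end Stmt15Aux

/-- `h_EAR(n,d,k) ≤ d + n / k^(d-1)` for `d, k ≥ 2`, witnessed by a system. -/
theorem stmt15 (n d k : ℕ) (hdn : d ≤ n) (hd : 2 ≤ d) (hk : 2 ≤ k) :
    (hmin hEAR n d k : ℝ) ≤ (d : ℝ) + (n : ℝ) / (k : ℝ) ^ (d - 1) ∧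
    ∃ S : DRS, WFS S ∧ nS S = n ∧ dS S = d ∧ kS S = k ∧
      (hEAR S : ℝ) ≤ (d : ℝ) + (n : ℝ) / (k : ℝ) ^ (d - 1) := by
  have hk1 : 1 ≤ k := by omega
  have hW := Stmt15Aux.WFS_Sys (n := n) (k := k) hd
  have hn := Stmt15Aux.nS_Sys (k := k) hd hdn
  have hdS := Stmt15Aux.dS_Sys (n := n) (k := k) hd
  have hkS := Stmt15Aux.kS_Sys hd hdn hk1
  have hle := Stmt15Aux.hEAR_Sys_le hd hdn hk1
  have hKpos : (0:ℝ) < (k:ℝ) ^ (d-1) := by positivity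
  have hreal : (hEAR (Stmt15Aux.Sys n d k) : ℝ) ≤ (d : ℝ) + (n : ℝ) / (k : ℝ) ^ (d - 1) := by
    calc (hEAR (Stmt15Aux.Sys n d k) : ℝ) ≤ ((d + (n-d) / k ^ (d-1) : ℕ) : ℝ) :=
          Nat.cast_le.2 hle
    _ = (d : ℝ) + (((n-d) / k ^ (d-1) : ℕ) : ℝ) := by push_cast; ring
    _ ≤ (d : ℝ) + ((n-d : ℕ) : ℝ) / ((k ^ (d-1) : ℕ) : ℝ) :=
          (add_le_add_iff_left _).2 Nat.cast_div_le
    _ ≤ (d : ℝ) + (n : ℝ) / (k : ℝ) ^ (d-1) := by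
          push_cast
          gcongr
          exact_mod_cast Nat.sub_le n d
  refine ⟨?_, Stmt15Aux.Sys n d k, hW, hn, hdS, hkS, hreal⟩
  have hmin_le : hmin hEAR n d k ≤ hEAR (Stmt15Aux.Sys n d k) :=
    Nat.sInf_le ⟨Stmt15Aux.Sys n d k, hW, hn, hdS, hkS, rfl⟩
  exact le_trans (Nat.cast_le.2 hmin_le) hreal
end
end

section
/- The set of triples (n(S), d(S), k(S)) over all decision rule systems S equals {(0,0,0)} ∪ {(n,d,k) : n,d,k positive integers, d ≤ n}, and the same set is attained when S ranges only over SR-reduced systems or only over AD-reduced systems. -/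
open scoped Classical
noncomputable section

namespace Stmt18Aux

lemma Ar_card {r : Rule} (h : WFRule r) : (Ar r).card = ruleLen r := by
  unfold Ar ruleLen
  apply Finset.card_image_of_injOn
  intro p hp q hq hpq
  exact Prod.ext hpq (h p hp q hq hpq)

lemma Ar_subset_AS {S : DRS} {r : Rule} (hr : r ∈ S) : Ar r ⊆ AS S :=
  Finset.subset_biUnion_of_mem Ar hr

lemma forward {S : DRS} (h : WFS S) :
    (0 < nS S ∧ 0 < dS S ∧ 0 < kS S ∧ dS S ≤ nS S) ∨
      (nS S = 0 ∧ dS S = 0 ∧ kS S = 0) := by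
  by_cases hE : ∀ r ∈ S, r.1 = ∅
  · right
    have hAS : AS S = ∅ := by
      apply Finset.eq_empty_iff_forall_notMem.2
      intro a ha
      simp only [AS, Finset.mem_biUnion] at ha
      obtain ⟨r, hr, har⟩ := ha
      simp [Ar, hE r hr] at har
    refine ⟨by simp [nS, hAS], ?_, by simp [kS, hAS]⟩
    simp only [dS]
    apply Nat.eq_zero_of_le_zero
    apply Finset.sup_le
    intro r hr
    simp [ruleLen, hE r hr]
    
  · left
    push_neg at hE
    obtain ⟨r, hr, hne⟩ := hE
    obtain ⟨⟨a, δ⟩, hp⟩ := hne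
    have haS : a ∈ AS S := by
      simp only [AS, Finset.mem_biUnion]
      exact ⟨r, hr, Finset.mem_image.2 ⟨(a, δ), hp, rfl⟩⟩
    have hn : 0 < nS S := Finset.card_pos.2 ⟨a, haS⟩
    have hd : 0 < dS S := by
      have : 0 < ruleLen r := Finset.card_pos.2 ⟨(a, δ), hp⟩
      exact lt_of_lt_of_le this (Finset.le_sup hr)
    have hk : 0 < kS S := by
      have hv : δ ∈ VS S a := by
        simp only [VS, Finset.mem_biUnion]
        exact ⟨r, hr, Finset.mem_image.2 ⟨(a, δ), Finset.mem_filter.2 ⟨hp, rfl⟩, rfl⟩⟩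
      have : 0 < (VS S a).card := Finset.card_pos.2 ⟨δ, hv⟩
      exact lt_of_lt_of_le this (Finset.le_sup (f := fun a => (VS S a).card) haS)
    refine ⟨hn, hd, hk, ?_⟩
    apply Finset.sup_le
    intro s hs
    rw [← Ar_card (h.2 s hs)]
    exact Finset.card_le_card (Ar_subset_AS hs)

def ruleg (d j : ℕ) : Rule := (((Finset.range d).image fun i => (i, j)), 0)

def Sgen (n d k : ℕ) : DRS :=
  ((Finset.range k).image (ruleg d))
  ∪ ((Finset.Ico d n).image fun m => (({(m, 0)} : Finset (Attr × ℕ)), 0))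

lemma mem_Sgen {n d k : ℕ} {r : Rule} : r ∈ Sgen n d k ↔
    (∃ j < k, r = ruleg d j) ∨ (∃ m, d ≤ m ∧ m < n ∧ r = ({(m, 0)}, 0)) := by
  simp only [Sgen, Finset.mem_union, Finset.mem_image, Finset.mem_range, Finset.mem_Ico]
  constructor
  · rintro (⟨j, hj, rfl⟩ | ⟨m, ⟨h1, h2⟩, rfl⟩)
    · exact Or.inl ⟨j, hj, rfl⟩
    · exact Or.inr ⟨m, h1, h2, rfl⟩
  · rintro (⟨j, hj, rfl⟩ | ⟨m, h1, h2, rfl⟩)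
    · exact Or.inl ⟨j, hj, rfl⟩
    · exact Or.inr ⟨m, ⟨h1, h2⟩, rfl⟩

lemma mem_ruleg1 {d j : ℕ} {p : Attr × ℕ} :
    p ∈ (ruleg d j).1 ↔ p.1 < d ∧ p.2 = j := by
  simp only [ruleg, Finset.mem_image, Finset.mem_range]
  constructor
  · rintro ⟨i, hi, rfl⟩; exact ⟨hi, rfl⟩
  · rintro ⟨h1, h2⟩; exact ⟨p.1, h1, by rw [← h2]⟩

variable {n d k : ℕ}

lemma WFS_Sgen (hd : 0 < d) (hk : 0 < k) : WFS (Sgen n d k) := by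
  constructor
  · exact ⟨ruleg d 0, mem_Sgen.2 (Or.inl ⟨0, hk, rfl⟩)⟩
  · intro r hr
    rcases mem_Sgen.1 hr with ⟨j, hj, rfl⟩ | ⟨m, h1, h2, rfl⟩
    · intro p hp q hq _
      rw [(mem_ruleg1.1 hp).2, (mem_ruleg1.1 hq).2]
    · intro p hp q hq _
      simp only [Finset.mem_singleton] at hp hq
      rw [hp, hq]

lemma AS_Sgen (hdn : d ≤ n) (hk : 0 < k) : AS (Sgen n d k) = Finset.range n := by
  ext a
  simp only [AS, Finset.mem_biUnion, Finset.mem_range]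
  constructor
  · rintro ⟨r, hr, har⟩
    rcases mem_Sgen.1 hr with ⟨j, hj, rfl⟩ | ⟨m, h1, h2, rfl⟩
    · simp only [Ar, Finset.mem_image] at har
      obtain ⟨p, hp, rfl⟩ := har
      exact lt_of_lt_of_le (mem_ruleg1.1 hp).1 hdn
    · simp only [Ar, Finset.mem_image, Finset.mem_singleton] at har
      obtain ⟨p, hp, rfl⟩ := har
      rw [hp]; exact h2
  · intro ha
    by_cases hcase : a < d
    · refine ⟨ruleg d 0, mem_Sgen.2 (Or.inl ⟨0, hk, rfl⟩), ?_⟩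
      exact Finset.mem_image.2 ⟨(a, 0), mem_ruleg1.2 ⟨hcase, rfl⟩, rfl⟩
    · refine ⟨({(a, 0)}, 0), mem_Sgen.2 (Or.inr ⟨a, le_of_not_gt hcase, ha, rfl⟩), ?_⟩
      exact Finset.mem_image.2 ⟨(a, 0), Finset.mem_singleton_self _, rfl⟩

lemma ruleLen_ruleg : ruleLen (ruleg d j) = d := by
  simp only [ruleLen, ruleg]
  rw [Finset.card_image_of_injective _ (fun i i' h => (Prod.mk.injEq .. ▸ h).1)]
  exact Finset.card_range d

lemma dS_Sgen (hd : 0 < d) (hk : 0 < k) : dS (Sgen n d k) = d := by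
  apply le_antisymm
  · apply Finset.sup_le
    intro r hr
    rcases mem_Sgen.1 hr with ⟨j, hj, rfl⟩ | ⟨m, h1, h2, rfl⟩
    · exact le_of_eq ruleLen_ruleg
    · simp [ruleLen]; omega
  · calc d = ruleLen (ruleg d 0) := ruleLen_ruleg.symm
      _ ≤ _ := Finset.le_sup (mem_Sgen.2 (Or.inl ⟨0, hk, rfl⟩))

lemma VS_Sgen_subset (hk : 0 < k) (a : Attr) : VS (Sgen n d k) a ⊆ Finset.range k := by
  intro v hv
  simp only [VS, Finset.mem_biUnion, Finset.mem_image, Finset.mem_filter] at hv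
  obtain ⟨r, hr, p, ⟨hp, hpa⟩, rfl⟩ := hv
  rcases mem_Sgen.1 hr with ⟨j, hj, rfl⟩ | ⟨m, h1, h2, rfl⟩
  · rw [Finset.mem_range, (mem_ruleg1.1 hp).2]; exact hj
  · simp only [Finset.mem_singleton] at hp
    rw [Finset.mem_range, hp]; exact hk

lemma VS_Sgen_zero (hd : 0 < d) : Finset.range k ⊆ VS (Sgen n d k) 0 := by
  intro j hj
  simp only [VS, Finset.mem_biUnion]
  refine ⟨ruleg d j, mem_Sgen.2 (Or.inl ⟨j, Finset.mem_range.1 hj, rfl⟩), ?_⟩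
  exact Finset.mem_image.2 ⟨(0, j), Finset.mem_filter.2 ⟨mem_ruleg1.2 ⟨hd, rfl⟩, rfl⟩, rfl⟩

lemma kS_Sgen (hd : 0 < d) (hdn : d ≤ n) (hk : 0 < k) : kS (Sgen n d k) = k := by
  apply le_antisymm
  · apply Finset.sup_le
    intro a _
    calc (VS (Sgen n d k) a).card ≤ (Finset.range k).card :=
          Finset.card_le_card (VS_Sgen_subset hk a)
      _ = k := Finset.card_range k
  · have h0 : (0 : Attr) ∈ AS (Sgen n d k) := by
      rw [AS_Sgen hdn hk]; exact Finset.mem_range.2 (lt_of_lt_of_le hd hdn)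
    calc k = (Finset.range k).card := (Finset.card_range k).symm
      _ ≤ (VS (Sgen n d k) 0).card := Finset.card_le_card (VS_Sgen_zero hd)
      _ ≤ _ := Finset.le_sup (f := fun a => (VS (Sgen n d k) a).card) h0

lemma SRred_Sgen (hd : 0 < d) : SRred (Sgen n d k) := by
  rintro r hr ⟨r', hr', hss⟩
  rcases mem_Sgen.1 hr with ⟨j, hj, rfl⟩ | ⟨m, h1, h2, rfl⟩ <;>
    rcases mem_Sgen.1 hr' with ⟨j', hj', rfl⟩ | ⟨m', h1', h2', rfl⟩
  · have h0 : ((0 : Attr), j') ∈ (ruleg d j).1 :=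
      hss.subset (mem_ruleg1.2 ⟨hd, rfl⟩)
    have : j' = j := (mem_ruleg1.1 h0).2
    subst this
    exact hss.ne rfl
  · have h0 : ((m' : Attr), 0) ∈ (ruleg d j).1 :=
      hss.subset (Finset.mem_singleton_self _)
    exact absurd (mem_ruleg1.1 h0).1 (not_lt.2 h1')
  · have := Finset.card_lt_card hss
    rw [show ((ruleg d j').1).card = d from ruleLen_ruleg] at this
    simp only [Finset.card_singleton] at this
    omega
  · have h0 : ((m' : Attr), 0) ∈ ({((m : Attr), 0)} : Finset (Attr × ℕ)) :=
      hss.subset (Finset.mem_singleton_self _)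
    simp only [Finset.mem_singleton, Prod.mk.injEq] at h0
    rw [h0.1] at hss
    exact hss.ne rfl

lemma SRred_ADred {S : DRS} (h : SRred S) : ADred S := by
  rintro r hr ⟨r', hr', hss, _⟩
  exact h r hr ⟨r', hr', hss⟩

def S0 : DRS := {((∅ : Finset (Attr × ℕ)), 0)}

lemma S0_props : WFS S0 ∧ SRred S0 ∧ ADred S0 ∧ nS S0 = 0 ∧ dS S0 = 0 ∧ kS S0 = 0 := by
  have hmem : ∀ r ∈ S0, r = ((∅ : Finset (Attr × ℕ)), 0) := by
    intro r hr; simpa [S0] using hr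
  have hsr : SRred S0 := by
    rintro r hr ⟨r', hr', hss⟩
    rw [hmem r hr] at hss
    exact Finset.not_ssubset_empty _ hss
  have hAS : AS S0 = ∅ := by
    apply Finset.eq_empty_iff_forall_notMem.2
    intro a ha
    simp only [AS, Finset.mem_biUnion] at ha
    obtain ⟨r, hr, har⟩ := ha
    simp [Ar, hmem r hr] at har
  refine ⟨⟨⟨_, Finset.mem_singleton_self _⟩, ?_⟩, hsr, SRred_ADred hsr,
    by simp [nS, hAS], ?_, by simp [kS, hAS]⟩
  · intro r hr p hp
    rw [hmem r hr] at hp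
    simp at hp
  · apply Nat.eq_zero_of_le_zero
    apply Finset.sup_le
    intro r hr
    simp [ruleLen, hmem r hr]

lemma construct {t : ℕ × ℕ × ℕ}
    (ht : t ∈ ({((0 : ℕ), (0 : ℕ), (0 : ℕ))} ∪
        {t : ℕ × ℕ × ℕ | 0 < t.1 ∧ 0 < t.2.1 ∧ 0 < t.2.2 ∧ t.2.1 ≤ t.1} :
          Set (ℕ × ℕ × ℕ))) :
    ∃ S : DRS, WFS S ∧ SRred S ∧ ADred S ∧ t = (nS S, dS S, kS S) := by
  obtain ⟨n, d, k⟩ := t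
  rcases ht with ht | ⟨hn, hd, hk, hdn⟩
  · obtain ⟨h1, h2, h3⟩ := S0_props
    refine ⟨S0, h1, h2, h3.1, ?_⟩
    simp only [Set.mem_singleton_iff, Prod.mk.injEq] at ht
    rw [ht.1, ht.2.1, ht.2.2, h3.2.1, h3.2.2.1, h3.2.2.2]
  · simp only at hn hd hk hdn
    refine ⟨Sgen n d k, WFS_Sgen hd hk, SRred_Sgen hd,
      SRred_ADred (SRred_Sgen hd), ?_⟩
    rw [nS, AS_Sgen hdn hk, Finset.card_range, dS_Sgen hd hk, kS_Sgen hd hdn hk]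

end Stmt18Aux

/-- the set of triples `(n(S), d(S), k(S))` over all systems (and over
SR-reduced and over AD-reduced systems) equals
`{(0,0,0)} ∪ {(n,d,k) : n,d,k ≥ 1, d ≤ n}`. -/
theorem stmt18 :
    {t : ℕ × ℕ × ℕ | ∃ S : DRS, WFS S ∧ t = (nS S, dS S, kS S)} =
      ({((0 : ℕ), (0 : ℕ), (0 : ℕ))} ∪
        {t : ℕ × ℕ × ℕ | 0 < t.1 ∧ 0 < t.2.1 ∧ 0 < t.2.2 ∧ t.2.1 ≤ t.1}) ∧
    {t : ℕ × ℕ × ℕ | ∃ S : DRS, WFS S ∧ SRred S ∧ t = (nS S, dS S, kS S)} =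
      ({((0 : ℕ), (0 : ℕ), (0 : ℕ))} ∪
        {t : ℕ × ℕ × ℕ | 0 < t.1 ∧ 0 < t.2.1 ∧ 0 < t.2.2 ∧ t.2.1 ≤ t.1}) ∧
    {t : ℕ × ℕ × ℕ | ∃ S : DRS, WFS S ∧ ADred S ∧ t = (nS S, dS S, kS S)} =
      ({((0 : ℕ), (0 : ℕ), (0 : ℕ))} ∪
        {t : ℕ × ℕ × ℕ | 0 < t.1 ∧ 0 < t.2.1 ∧ 0 < t.2.2 ∧ t.2.1 ≤ t.1}) := by
  refine ⟨?_, ?_, ?_⟩ <;> ext t <;> constructor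
  · rintro ⟨S, hS, rfl⟩
    rcases Stmt18Aux.forward hS with h | ⟨h1, h2, h3⟩
    · exact Or.inr h
    · exact Or.inl (by simp [h1, h2, h3])
  · intro ht
    obtain ⟨S, h1, _, _, h4⟩ := Stmt18Aux.construct ht
    exact ⟨S, h1, h4⟩
  · rintro ⟨S, hS, _, rfl⟩
    rcases Stmt18Aux.forward hS with h | ⟨h1, h2, h3⟩
    · exact Or.inr h
    · exact Or.inl (by simp [h1, h2, h3])
  · intro ht
    obtain ⟨S, h1, h2, _, h4⟩ := Stmt18Aux.construct ht
    exact ⟨S, h1, h2, h4⟩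
  · rintro ⟨S, hS, _, rfl⟩
    rcases Stmt18Aux.forward hS with h | ⟨h1, h2, h3⟩
    · exact Or.inr h
    · exact Or.inl (by simp [h1, h2, h3])
  · intro ht
    obtain ⟨S, h1, _, h3, h4⟩ := Stmt18Aux.construct ht
    exact ⟨S, h1, h3, h4⟩
end
end
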